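/- Let q ∈ ℰ⁺ and suppose that for every ε > 0 there exist q' ∈ F_ui(G) and q'' ∈ ℰ⁺ with q = q' + q'' and Gq'' ≤ ε pointwise. Then q ∈ F_ui(G). -/

import Mathlib

open MeasureTheory ENNReal NNReal Filter

/-- `Gop μ G q x = ∫ G(x,y) q(y) dμ(y)`. -/
noncomputable def Gop {E : Type*} [MeasurableSpace E] (μ : Measure E)
    (G : E → E → ℝ≥0∞) (q : E → ℝ≥0∞) (x : E) : ℝ≥0∞ :=
  ∫⁻ y, G x y * q y ∂μ

/-- The kernel operator `K_q f x = ∫ G(x,y) f(y) q(y) dμ(y)` acting on real functions. -/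
noncomputable def Kq {E : Type*} [MeasurableSpace E] (μ : Measure E)
    (G : E → E → ℝ≥0∞) (q : E → ℝ≥0∞) (f : E → ℝ) (x : E) : ℝ :=
  ∫ y, (G x y * q y).toReal * f y ∂μ

/-- Compactness of `K_q` on the space of bounded measurable functions with sup-norm:
the image of the unit ball is totally bounded for the uniformity of uniform convergence. -/
def KqCompact {E : Type*} [MeasurableSpace E] (μ : Measure E)
    (G : E → E → ℝ≥0∞) (q : E → ℝ≥0∞) : Prop :=
  TotallyBounded ((fun f => UniformFun.ofFun (Kq μ G q f)) ''
    {f : E → ℝ | Measurable f ∧ ∀ x, |f x| ≤ 1})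

/-- `q ∈ F_co(G)`: `q` measurable, `Gq` bounded and `K_q` compact on `ℰ_b`. -/
def MemFco {E : Type*} [MeasurableSpace E] (μ : Measure E)
    (G : E → E → ℝ≥0∞) (q : E → ℝ≥0∞) : Prop :=
  Measurable q ∧ (∃ M : ℝ≥0, ∀ x, Gop μ G q x ≤ M) ∧ KqCompact μ G q

/-- `q ∈ F_ui(G)`: `q` measurable and `{G(x,·)q : x ∈ E}` is uniformly integrable. -/
def MemFui {E : Type*} [MeasurableSpace E] (μ : Measure E)
    (G : E → E → ℝ≥0∞) (q : E → ℝ≥0∞) : Prop :=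
  Measurable q ∧ ∀ ε : ℝ≥0∞, 0 < ε → ∃ g : E → ℝ≥0∞, Measurable g ∧
    (∫⁻ y, g y ∂μ) < ⊤ ∧
    ∀ x : E, (∫⁻ y in {y | g y ≤ G x y * q y}, G x y * q y ∂μ) ≤ ε

/-- If for every `ε > 0` one can write `q = q' + q''` with `q' ∈ F_ui(G)`
and `Gq'' ≤ ε` pointwise, then `q ∈ F_ui(G)`. -/
theorem stmt6 {E : Type*} [MeasurableSpace E] (μ : Measure E)
    (G : E → E → ℝ≥0∞) (hG : Measurable (Function.uncurry G))
    (q : E → ℝ≥0∞) (hq : Measurable q)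
    (h : ∀ ε : ℝ≥0, 0 < ε → ∃ q' q'' : E → ℝ≥0∞,
      MemFui μ G q' ∧ Measurable q'' ∧ (∀ y, q y = q' y + q'' y) ∧
      ∀ x, Gop μ G q'' x ≤ (ε : ℝ≥0∞)) :
    MemFui μ G q := by
  refine ⟨hq, fun ε hε => ?_⟩
  -- choose δ with 3δ ≤ ε
  set δ : ℝ≥0 := (min 1 (ε / 3)).toNNReal with hδdef
  have hmin_ne_top : min 1 (ε / 3) ≠ ⊤ := ne_top_of_le_ne_top one_ne_top (min_le_left _ _)
  have hdivpos : 0 < ε / 3 := ENNReal.div_pos hε.ne' (by norm_num)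
  have hδcoe : (δ : ℝ≥0∞) = min 1 (ε / 3) := ENNReal.coe_toNNReal hmin_ne_top
  have hδpos : (0 : ℝ≥0∞) < δ := by
    rw [hδcoe]; exact lt_min one_pos hdivpos
  have h3δ : 3 * (δ : ℝ≥0∞) ≤ ε := by
    rw [hδcoe]
    calc 3 * min 1 (ε / 3) ≤ 3 * (ε / 3) := by
          exact mul_le_mul_right (min_le_right _ _) _
      _ ≤ ε := ENNReal.mul_div_le
  have hδpos' : (0 : ℝ≥0) < δ := by exact_mod_cast hδpos
  obtain ⟨q', q'', ⟨hq'm, hq'ui⟩, hq''m, hsum, hGq''⟩ := h δ hδpos'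
  obtain ⟨g, hgm, hgint, hgbd⟩ := hq'ui (δ : ℝ≥0∞) hδpos
  refine ⟨fun y => 2 * g y, hgm.const_mul 2, ?_, ?_⟩
  · rw [lintegral_const_mul 2 hgm]
    exact ENNReal.mul_lt_top ENNReal.coe_lt_top hgint
  intro x
  have hGx : Measurable (G x) := hG.comp measurable_prodMk_left
  have hT : MeasurableSet {y | g y ≤ G x y * q' y} :=
    measurableSet_le hgm (hGx.mul hq'm)
  set T := {y | g y ≤ G x y * q' y} with hTdef
  -- pointwise bound on S
  have hpt : ∀ y ∈ {y | 2 * g y ≤ G x y * q y},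
      G x y * q y ≤ T.indicator (fun y => G x y * q' y) y + 2 * (G x y * q'' y) := by
    intro y hy
    simp only [Set.mem_setOf_eq] at hy
    by_cases hyT : y ∈ T
    · rw [Set.indicator_of_mem hyT, hsum y, mul_add, two_mul]
      exact add_le_add le_rfl le_self_add
    · rw [Set.indicator_of_notMem hyT]
      simp only [hTdef, Set.mem_setOf_eq, not_le] at hyT
      -- on the complement, G x y * q' y ≤ G x y * q'' y
      have hle : G x y * q' y ≤ G x y * q'' y := by
        by_contra hlt
        push_neg at hlt
        have h1 : G x y * q' y + G x y * q'' y < g y + g y :=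
          ENNReal.add_lt_add hyT (hlt.trans hyT)
        rw [← two_mul] at h1
        rw [hsum y, mul_add] at hy
        exact absurd (hy.trans_lt h1) (lt_irrefl _)
      rw [zero_add]
      calc G x y * q y = G x y * q' y + G x y * q'' y := by rw [hsum y, mul_add]
        _ ≤ G x y * q'' y + G x y * q'' y := add_le_add hle le_rfl
        _ = 2 * (G x y * q'' y) := (two_mul _).symm
  have step1 : (∫⁻ y in {y | 2 * g y ≤ G x y * q y}, G x y * q y ∂μ) ≤
      ∫⁻ y in {y | 2 * g y ≤ G x y * q y},
        (T.indicator (fun y => G x y * q' y) y + 2 * (G x y * q'' y)) ∂μ :=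
    setLIntegral_mono ((((hGx.mul hq'm).indicator hT).add
      ((hGx.mul hq''m).const_mul 2))) hpt
  have step2 : (∫⁻ y in {y | 2 * g y ≤ G x y * q y},
        (T.indicator (fun y => G x y * q' y) y + 2 * (G x y * q'' y)) ∂μ) ≤
      ∫⁻ y, (T.indicator (fun y => G x y * q' y) y + 2 * (G x y * q'' y)) ∂μ :=
    setLIntegral_le_lintegral _ _
  have step3 : (∫⁻ y, (T.indicator (fun y => G x y * q' y) y + 2 * (G x y * q'' y)) ∂μ)
      = (∫⁻ y in T, G x y * q' y ∂μ) + 2 * ∫⁻ y, G x y * q'' y ∂μ := by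
    rw [lintegral_add_left (f := T.indicator (fun y => G x y * q' y)) ((hGx.mul hq'm).indicator hT),
      lintegral_indicator hT, lintegral_const_mul 2 (f := fun y => G x y * q'' y) (hGx.mul hq''m)]
  have hbd1 : (∫⁻ y in T, G x y * q' y ∂μ) ≤ δ := hgbd x
  have hbd2 : (2 : ℝ≥0∞) * ∫⁻ y, G x y * q'' y ∂μ ≤ 2 * δ :=
    mul_le_mul_right (hGq'' x) 2
  calc (∫⁻ y in {y | 2 * g y ≤ G x y * q y}, G x y * q y ∂μ)
      ≤ (∫⁻ y in T, G x y * q' y ∂μ) + 2 * ∫⁻ y, G x y * q'' y ∂μ :=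
        step1.trans (step2.trans_eq step3)
    _ ≤ (δ : ℝ≥0∞) + 2 * δ := add_le_add hbd1 hbd2
    _ = 3 * δ := by ring
    _ ≤ ε := h3δ
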